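/- Let 𝒜 : V → V* decompose into symmetric part G and antisymmetric part B (so 𝒜 = G + B with G(v)(w) = G(w)(v) and B(v)(w) = −B(w)(v)). If G is positive definite, then V ⊕ V* = graph(G + B) ⊕ graph(−G + B). -/
import Mathlib


/-- If `G : V → V*` is symmetric positive definite and `B : V → V*` is antisymmetric, then
`V ⊕ V* = graph (G + B) ⊕ graph (-G + B)`. -/
theorem graphs_complementary
    (V : Type*) [AddCommGroup V] [Module ℝ V] [FiniteDimensional ℝ V]
    (G B : V →ₗ[ℝ] Module.Dual ℝ V)
    (hGsym : ∀ v w, G v w = G w v)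
    (hGpos : ∀ v : V, v ≠ 0 → 0 < G v v)
    (hBanti : ∀ v w, B v w = -(B w v)) :
    IsCompl (LinearMap.graph (G + B)) (LinearMap.graph (-G + B)) := by
  have hGzero : ∀ v : V, G v = 0 → v = 0 := by
    intro v hv
    by_contra h
    have := hGpos v h
    rw [hv] at this
    simp at this
  have hinj : Function.Injective G := by
    intro a b hab
    have : G (a - b) = 0 := by rw [map_sub, hab, sub_self]
    have := hGzero _ this
    linear_combination (norm := module) this
  have hsurj : Function.Surjective G :=
    (LinearMap.injective_iff_surjective_of_finrank_eq_finrank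
      (Subspace.dual_finrank_eq).symm).mp hinj
  constructor
  · rw [Submodule.disjoint_def]
    rintro ⟨v, φ⟩ h1 h2
    rw [LinearMap.mem_graph_iff _ _] at h1 h2
    simp only [LinearMap.add_apply, LinearMap.neg_apply] at h1 h2
    have hG : G v = 0 := by
      have : G v + B v = -G v + B v := h1.symm.trans h2
      have h2G : (2 : ℝ) • G v = 0 := by linear_combination (norm := module) this
      have := smul_eq_zero.mp h2G
      simpa using this
    have hv0 : v = 0 := hGzero v hG
    subst hv0
    simp only [map_zero] at h1
    simp [h1, Prod.ext_iff]
  · rw [codisjoint_iff, eq_top_iff]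
    rintro ⟨v, φ⟩ -
    obtain ⟨u, hu⟩ := hsurj (φ - B v)
    rw [Submodule.mem_sup]
    refine ⟨(((1:ℝ)/2) • (v + u), (G + B) (((1:ℝ)/2) • (v + u))),
      (LinearMap.mem_graph_iff _ _).mpr rfl,
      (((1:ℝ)/2) • (v - u), (-G + B) (((1:ℝ)/2) • (v - u))),
      (LinearMap.mem_graph_iff _ _).mpr rfl, ?_⟩
    simp only [Prod.mk_add_mk, Prod.mk.injEq]
    constructor
    · show ((1:ℝ)/2) • (v + u) + ((1:ℝ)/2) • (v - u) = v
      module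
    · show (G + B) (((1:ℝ)/2) • (v + u)) + (-G + B) (((1:ℝ)/2) • (v - u)) = φ
      simp only [LinearMap.add_apply, LinearMap.neg_apply, map_smul, map_add, map_sub]
      linear_combination (norm := module) hu
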